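/- The best Frobenius-norm approximation of A by a single Kronecker product B ⊗ C (with B of size m₁×n₁ and C of size m₂×n₂) has error equal to (Σ_{k≥2} σ_k²)^{1/2}, where σ₁ ≥ σ₂ ≥ … are the singular values of the rearranged matrix Ã with Ã(⟨i₁,j₁⟩,⟨i₂,j₂⟩) = A(⟨i₁,i₂⟩,⟨j₁,j₂⟩); it is achieved by taking vec(B)vec(C)ᵀ equal to the best rank-1 approximation σ₁u₁v₁ᵀ of Ã. -/

import Mathlib

open Matrix
open scoped Kronecker

/-- Frobenius norm. -/
noncomputable def frob {m n : Type*} [Fintype m] [Fintype n] (M : Matrix m n ℝ) : ℝ :=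
  Real.sqrt (∑ i, ∑ j, (M i j) ^ 2)

section helpers
variable {α β : Type*} [Fintype α] [Fintype β]

lemma expand_sq (M : Matrix α β ℝ) (u : α → ℝ) (v : β → ℝ) :
    ∑ p, ∑ q, (M p q - u p * v q) ^ 2 =
      (∑ p, ∑ q, (M p q) ^ 2) - 2 * (u ⬝ᵥ (M *ᵥ v)) +
        (∑ p, (u p) ^ 2) * (∑ q, (v q) ^ 2) := by
  have h1 : ∑ p, ∑ q, (M p q - u p * v q) ^ 2 =
      ∑ p, ∑ q, ((M p q) ^ 2 - 2 * (u p * (M p q * v q)) + (u p) ^ 2 * (v q) ^ 2) := by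
    refine Finset.sum_congr rfl fun p _ => Finset.sum_congr rfl fun q _ => ?_
    ring
  have h2 : (u ⬝ᵥ (M *ᵥ v)) = ∑ p, ∑ q, u p * (M p q * v q) := by
    simp [dotProduct, mulVec, Finset.mul_sum]
  have h3 : (∑ p, (u p) ^ 2) * (∑ q, (v q) ^ 2) = ∑ p, ∑ q, (u p) ^ 2 * (v q) ^ 2 := by
    rw [Finset.sum_mul_sum]
  rw [h1, h2, h3]
  simp only [Finset.sum_add_distrib, Finset.sum_sub_distrib, Finset.mul_sum]

lemma dot_self_mulVec (M : Matrix α β ℝ) (v : β → ℝ) :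
    (M *ᵥ v) ⬝ᵥ (M *ᵥ v) = v ⬝ᵥ ((Mᴴ * M) *ᵥ v) := by
  rw [← mulVec_mulVec, dotProduct_mulVec v, conjTranspose_eq_transpose_of_trivial,
    vecMul_transpose]

end helpers

theorem Matrix.isHermitian_transpose_mul_self {α β : Type*} [Fintype α] (M : Matrix α β ℝ) :
    (Mᵀ * M).IsHermitian := by
  simpa using Matrix.isHermitian_conjTranspose_mul_self M

section helpers2
variable {α β : Type*} [Fintype α] [Fintype β] [DecidableEq β]

lemma trace_helper (M : Matrix α β ℝ) :
    ∑ p, ∑ q, (M p q) ^ 2 = ∑ i, (isHermitian_transpose_mul_self M).eigenvalues i := by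
  set hM := isHermitian_transpose_mul_self M
  have h1 : ∑ p, ∑ q, (M p q) ^ 2 = (Mᴴ * M).trace := by
    simp only [trace, diag_apply, mul_apply, conjTranspose_apply, star_trivial, sq]
    rw [Finset.sum_comm]
  have hU : star (hM.eigenvectorUnitary : Matrix β β ℝ) *
      (hM.eigenvectorUnitary : Matrix β β ℝ) = 1 :=
    Matrix.mem_unitaryGroup_iff'.mp hM.eigenvectorUnitary.2
  have h2 := hM.spectral_theorem
  rw [h1]
  conv_lhs => rw [conjTranspose_eq_transpose_of_trivial, h2, Unitary.conjStarAlgAut_apply]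
  rw [Matrix.trace_mul_comm, ← mul_assoc, hU, one_mul, trace_diagonal]
  simp

lemma rayleigh_helper [Nonempty β] (M : Matrix α β ℝ) (v : β → ℝ) :
    v ⬝ᵥ ((Mᴴ * M) *ᵥ v) ≤
      (⨆ i, (isHermitian_transpose_mul_self M).eigenvalues i) * (v ⬝ᵥ v) := by
  set hM := isHermitian_transpose_mul_self M with hMdef
  set U : Matrix β β ℝ := (hM.eigenvectorUnitary : Matrix β β ℝ) with hUdef
  have hstar : star U = Uᵀ := Matrix.conjTranspose_eq_transpose_of_trivial U ▸
    (Matrix.star_eq_conjTranspose U)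
  set w : β → ℝ := star U *ᵥ v with hwdef
  have key : v ⬝ᵥ ((Mᴴ * M) *ᵥ v) = ∑ i, hM.eigenvalues i * (w i) ^ 2 := by
    conv_lhs => rw [conjTranspose_eq_transpose_of_trivial, hM.spectral_theorem, Unitary.conjStarAlgAut_apply]
    rw [← mulVec_mulVec, ← mulVec_mulVec, dotProduct_mulVec]
    have : v ᵥ* U = w := by rw [hwdef, hstar, mulVec_transpose]
    rw [this]
    simp [dotProduct, mulVec_diagonal, sq]
    exact Finset.sum_congr rfl fun i _ => by ring
  have hw2 : ∑ i, (w i) ^ 2 = v ⬝ᵥ v := by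
    have : ∑ i, (w i) ^ 2 = w ⬝ᵥ w := by simp [dotProduct, sq]
    have hU2 : U * star U = 1 := Matrix.mem_unitaryGroup_iff.mp hM.eigenvectorUnitary.2
    rw [this]
    conv_lhs => rw [hwdef]
    rw [dotProduct_mulVec, hstar, vecMul_transpose, ← hstar, mulVec_mulVec, hU2, one_mulVec]
  rw [key]
  have hsup : ∀ i, hM.eigenvalues i ≤ ⨆ j, hM.eigenvalues j := fun i =>
    le_ciSup (Set.Finite.bddAbove (Set.finite_range _)) i
  calc ∑ i, hM.eigenvalues i * (w i) ^ 2
      ≤ ∑ i, (⨆ j, hM.eigenvalues j) * (w i) ^ 2 :=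
        Finset.sum_le_sum fun i _ => mul_le_mul_of_nonneg_right (hsup i) (sq_nonneg _)
    _ = (⨆ j, hM.eigenvalues j) * ∑ i, (w i) ^ 2 := by rw [Finset.mul_sum]
    _ = (⨆ j, hM.eigenvalues j) * (v ⬝ᵥ v) := by rw [hw2]

end helpers2

lemma reindex_sum {m₁ m₂ n₁ n₂ : Type*} [Fintype m₁] [Fintype m₂] [Fintype n₁] [Fintype n₂]
    (f : m₁ → m₂ → n₁ → n₂ → ℝ) :
    ∑ i : m₁ × m₂, ∑ j : n₁ × n₂, f i.1 i.2 j.1 j.2 =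
      ∑ p : m₁ × n₁, ∑ q : m₂ × n₂, f p.1 q.1 p.2 q.2 := by
  simp only [Fintype.sum_prod_type]
  refine Finset.sum_congr rfl fun i₁ _ => ?_
  rw [Finset.sum_comm]

lemma eigvec_norm {α β : Type*} [Fintype α] [Fintype β] [DecidableEq β]
    (M : Matrix α β ℝ) (i : β) :
    ∑ q, ((isHermitian_transpose_mul_self M).eigenvectorBasis i q) ^ 2 = 1 := by
  set hM := isHermitian_transpose_mul_self M
  have h := hM.eigenvectorBasis.orthonormal.1 i
  rw [EuclideanSpace.norm_eq] at h
  have := Real.sqrt_eq_one.mp h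
  simpa [Real.norm_eq_abs, sq_abs] using this

/-- The best Frobenius-norm approximation of A by a single Kronecker product
    B ⊗ C has error (Σ_{k≥2} σ_k²)^{1/2} = (Σ eig − max eig)^{1/2}, where the
    eigenvalues are those of Ãᴴ Ã for the rearranged matrix Ã, and it is
    achieved. -/
theorem best_kronecker_approx_error
    {m₁ m₂ n₁ n₂ : Type*} [Fintype m₁] [Fintype m₂] [Fintype n₁] [Fintype n₂]
    [DecidableEq m₂] [DecidableEq n₂] [Nonempty (m₂ × n₂)]
    (A : Matrix (m₁ × m₂) (n₁ × n₂) ℝ) :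
    let Atil : Matrix (m₁ × n₁) (m₂ × n₂) ℝ :=
      Matrix.of fun p q => A (p.1, q.1) (p.2, q.2)
    let eig := (show (Atilᵀ * Atil).IsHermitian by
      simpa using Matrix.isHermitian_conjTranspose_mul_self Atil).eigenvalues
    let err := Real.sqrt ((∑ i, eig i) - ⨆ i, eig i)
    (∃ (B : Matrix m₁ n₁ ℝ) (C : Matrix m₂ n₂ ℝ), frob (A - B ⊗ₖ C) = err) ∧
      ∀ (B : Matrix m₁ n₁ ℝ) (C : Matrix m₂ n₂ ℝ), err ≤ frob (A - B ⊗ₖ C) := by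
  intro Atil eig err
  -- frobenius formula
  have hfrob : ∀ (B : Matrix m₁ n₁ ℝ) (C : Matrix m₂ n₂ ℝ),
      frob (A - B ⊗ₖ C) = Real.sqrt
        ((∑ p, ∑ q, (Atil p q) ^ 2)
          - 2 * ((fun p : m₁ × n₁ => B p.1 p.2) ⬝ᵥ (Atil *ᵥ (fun q : m₂ × n₂ => C q.1 q.2)))
          + (∑ p : m₁ × n₁, (B p.1 p.2) ^ 2) * (∑ q : m₂ × n₂, (C q.1 q.2) ^ 2)) := by
    intro B C
    unfold frob
    congr 1
    rw [← expand_sq]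
    have : ∀ (i : m₁ × m₂) (j : n₁ × n₂),
        ((A - B ⊗ₖ C) i j) ^ 2 = (A (i.1, i.2) (j.1, j.2) - B i.1 j.1 * C i.2 j.2) ^ 2 := by
      intro i j
      simp [Matrix.sub_apply, kroneckerMap_apply]
    calc ∑ i, ∑ j, ((A - B ⊗ₖ C) i j) ^ 2
        = ∑ i : m₁ × m₂, ∑ j : n₁ × n₂,
            (A (i.1, i.2) (j.1, j.2) - B i.1 j.1 * C i.2 j.2) ^ 2 :=
          Finset.sum_congr rfl fun i _ => Finset.sum_congr rfl fun j _ => this i j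
      _ = ∑ p : m₁ × n₁, ∑ q : m₂ × n₂,
            (A (p.1, q.1) (p.2, q.2) - B p.1 p.2 * C q.1 q.2) ^ 2 :=
          reindex_sum (fun i₁ i₂ j₁ j₂ => (A (i₁, i₂) (j₁, j₂) - B i₁ j₁ * C i₂ j₂) ^ 2)
      _ = ∑ p, ∑ q, (Atil p q - (fun p : m₁ × n₁ => B p.1 p.2) p *
            (fun q : m₂ × n₂ => C q.1 q.2) q) ^ 2 := rfl
  have hS : ∑ p, ∑ q, (Atil p q) ^ 2 = ∑ i, eig i := trace_helper Atil
  have hsup_nonneg : 0 ≤ ⨆ i, eig i := by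
    obtain ⟨i⟩ := ‹Nonempty (m₂ × n₂)›
    exact le_trans (Matrix.eigenvalues_conjTranspose_mul_self_nonneg Atil i)
      (le_ciSup (Set.Finite.bddAbove (Set.finite_range _)) i)
  constructor
  · -- existence
    obtain ⟨i₀, hi₀⟩ := Finite.exists_max eig
    have hsupeq : (⨆ i, eig i) = eig i₀ :=
      le_antisymm (ciSup_le hi₀) (le_ciSup (Set.Finite.bddAbove (Set.finite_range _)) i₀)
    set hM := Matrix.isHermitian_transpose_mul_self Atil with hMdef
    set v₁ : (m₂ × n₂) → ℝ := ⇑(hM.eigenvectorBasis i₀) with hv₁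
    refine ⟨Matrix.of fun i j => (Atil *ᵥ v₁) (i, j), Matrix.of fun k l => v₁ (k, l), ?_⟩
    rw [hfrob]
    have hB : (fun p : m₁ × n₁ => (Atil *ᵥ v₁) (p.1, p.2)) = Atil *ᵥ v₁ := by
      funext p; rfl
    have hC : (fun q : m₂ × n₂ => v₁ (q.1, q.2)) = v₁ := by funext q; rfl
    have hV : ∑ q, (v₁ q) ^ 2 = 1 := eigvec_norm Atil i₀
    have hVdot : v₁ ⬝ᵥ v₁ = 1 := by
      rw [show v₁ ⬝ᵥ v₁ = ∑ q, (v₁ q) ^ 2 from by simp [dotProduct, sq]]; exact hV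
    have hUt : (Atil *ᵥ v₁) ⬝ᵥ (Atil *ᵥ v₁) = eig i₀ := by
      rw [dot_self_mulVec, conjTranspose_eq_transpose_of_trivial, hM.mulVec_eigenvectorBasis i₀, ← hv₁, dotProduct_smul, hVdot]
      simp; rfl
    have hU : ∑ p : m₁ × n₁, ((Atil *ᵥ v₁) (p.1, p.2)) ^ 2 = eig i₀ := by
      rw [← hUt]
      simp [dotProduct, sq]
    show Real.sqrt _ = Real.sqrt ((∑ i, eig i) - ⨆ i, eig i)
    congr 1
    rw [show ((fun p : m₁ × n₁ => (Matrix.of fun i j => (Atil *ᵥ v₁) (i, j)) p.1 p.2)) =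
      Atil *ᵥ v₁ from by funext p; rfl]
    rw [show ((fun q : m₂ × n₂ => (Matrix.of fun k l => v₁ (k, l)) q.1 q.2)) = v₁ from by
      funext q; rfl]
    rw [hS, hsupeq, hUt]
    have hU' : ∑ p : m₁ × n₁, ((Matrix.of fun i j => (Atil *ᵥ v₁) (i, j)) p.1 p.2) ^ 2
        = eig i₀ := hU
    have hV' : ∑ q : m₂ × n₂, ((Matrix.of fun k l => v₁ (k, l)) q.1 q.2) ^ 2 = 1 := hV
    rw [hU', hV']
    ring
  · -- lower bound
    intro B C
    rw [hfrob]
    apply Real.sqrt_le_sqrt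
    set u : (m₁ × n₁) → ℝ := fun p => B p.1 p.2 with hu
    set v : (m₂ × n₂) → ℝ := fun q => C q.1 q.2 with hv
    set t : ℝ := u ⬝ᵥ (Atil *ᵥ v) with ht
    set Uu : ℝ := ∑ p, (u p) ^ 2 with hUu
    set Vv : ℝ := ∑ q, (v q) ^ 2 with hVv
    have hUu0 : 0 ≤ Uu := Finset.sum_nonneg fun _ _ => sq_nonneg _
    have hVv0 : 0 ≤ Vv := Finset.sum_nonneg fun _ _ => sq_nonneg _
    have hcs : t ^ 2 ≤ Uu * ((⨆ i, eig i) * Vv) := by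
      have h1 : t ^ 2 ≤ Uu * ∑ p, ((Atil *ᵥ v) p) ^ 2 := by
        have := Finset.sum_mul_sq_le_sq_mul_sq Finset.univ u (Atil *ᵥ v)
        simpa [dotProduct, ht, hUu] using this
      have h2 : ∑ p, ((Atil *ᵥ v) p) ^ 2 = v ⬝ᵥ ((Atilᴴ * Atil) *ᵥ v) := by
        rw [← dot_self_mulVec]
        simp [dotProduct, sq]
      have h3 : v ⬝ᵥ ((Atilᴴ * Atil) *ᵥ v) ≤ (⨆ i, eig i) * (v ⬝ᵥ v) :=
        rayleigh_helper Atil v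
      have h4 : v ⬝ᵥ v = Vv := by simp [dotProduct, sq, hVv]
      calc t ^ 2 ≤ Uu * ∑ p, ((Atil *ᵥ v) p) ^ 2 := h1
        _ = Uu * (v ⬝ᵥ ((Atilᴴ * Atil) *ᵥ v)) := by rw [h2]
        _ ≤ Uu * ((⨆ i, eig i) * Vv) := by
            apply mul_le_mul_of_nonneg_left _ hUu0
            rw [← h4]; exact h3
    rw [hS]
    nlinarith [sq_nonneg ((⨆ i, eig i) - Uu * Vv), sq_nonneg ((⨆ i, eig i) + Uu * Vv - 2 * t),
      mul_nonneg hUu0 hVv0, mul_nonneg hsup_nonneg (mul_nonneg hUu0 hVv0)]
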